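/- Let p be a prime and f(x) = Σ c_i x^i a formal power series with coefficients in ℤ_(p). Write f(x)^l = Σ c_i^(l) x^i. Then for all i ≥ 1 and l ≥ 1, ν_p(c_i^(l)) ≥ ν_p(l) − ν_p(i), where ν_p denotes the p-adic valuation (extended to ℤ_(p)). -/

import Mathlib

open PowerSeries

private lemma norm_le_one_iff_val (p : ℕ) [Fact p.Prime] (q : ℚ) (hq : q ≠ 0) :
    padicNorm p q ≤ 1 ↔ 0 ≤ padicValRat p q := by
  rw [padicNorm.eq_zpow_of_nonzero hq]
  have hp1 : (1 : ℚ) < p := by exact_mod_cast (Fact.out : p.Prime).one_lt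
  rw [show (1 : ℚ) = (p : ℚ) ^ (0 : ℤ) by simp]
  rw [zpow_le_zpow_iff_right₀ hp1]
  omega

private lemma norm_mul_le_one (p : ℕ) [Fact p.Prime] (g h : PowerSeries ℚ)
    (hg : ∀ n, padicNorm p (coeff n g) ≤ 1)
    (hh : ∀ n, padicNorm p (coeff n h) ≤ 1) (n : ℕ) :
    padicNorm p (coeff n (g * h)) ≤ 1 := by
  rw [PowerSeries.coeff_mul]
  apply padicNorm.sum_le' _ zero_le_one
  intro x _
  rw [padicNorm.mul]
  calc padicNorm p (coeff x.1 g) * padicNorm p (coeff x.2 h)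
      ≤ 1 * 1 := by
        apply mul_le_mul (hg _) (hh _) (padicNorm.nonneg _) zero_le_one
    _ = 1 := mul_one 1

private lemma norm_pow_le_one (p : ℕ) [Fact p.Prime] (g : PowerSeries ℚ)
    (hg : ∀ n, padicNorm p (coeff n g) ≤ 1) (k : ℕ) (n : ℕ) :
    padicNorm p (coeff n (g ^ k)) ≤ 1 := by
  induction k generalizing n with
  | zero =>
    simp only [pow_zero, PowerSeries.coeff_one]
    split <;> simp [padicNorm.one]
  | succ k ih =>
    rw [pow_succ]
    exact norm_mul_le_one p _ _ ih hg n

theorem stmt6 (p : ℕ) (hp : p.Prime) [hfact : Fact p.Prime] (f : PowerSeries ℚ)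
    (hf : ∀ i, PowerSeries.coeff i f ≠ 0 → 0 ≤ padicValRat p (PowerSeries.coeff i f))
    (i l : ℕ) (hi : 1 ≤ i) (hl : 1 ≤ l)
    (hne : PowerSeries.coeff i (f ^ l) ≠ 0) :
    (padicValNat p l : ℤ) - (padicValNat p i : ℤ) ≤
      padicValRat p (PowerSeries.coeff i (f ^ l)) := by
  have hfn : ∀ n, padicNorm p (coeff n f) ≤ 1 := by
    intro n
    by_cases h : coeff n f = 0
    · simp [h, padicNorm.zero]
    · exact (norm_le_one_iff_val p _ h).2 (hf n h)
  -- derivative of f has integral coefficients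
  have hdn : ∀ n, padicNorm p (coeff n (PowerSeries.derivative ℚ f)) ≤ 1 := by
    intro n
    rw [PowerSeries.coeff_derivative, padicNorm.mul]
    calc padicNorm p (coeff (n+1) f) * padicNorm p ((n : ℚ) + 1)
        ≤ 1 * 1 := by
          apply mul_le_mul (hfn _) ?_ (padicNorm.nonneg _) zero_le_one
          have := padicNorm.of_nat (p := p) (n + 1)
          simpa using this
      _ = 1 := mul_one 1
  -- key identity
  have hkey : (i : ℚ) * coeff i (f ^ l) =
      (l : ℚ) * coeff (i - 1) (f ^ (l - 1) * PowerSeries.derivative ℚ f) := by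
    obtain ⟨j, rfl⟩ : ∃ j, i = j + 1 := ⟨i - 1, by omega⟩
    have h1 : coeff j (PowerSeries.derivative ℚ (f ^ l)) =
        coeff (j + 1) (f ^ l) * ((j : ℚ) + 1) := by
      rw [PowerSeries.coeff_derivative]
    have h2 : PowerSeries.derivative ℚ (f ^ l) =
        PowerSeries.C (l : ℚ) * (f ^ (l - 1) * PowerSeries.derivative ℚ f) := by
      rw [Derivation.leibniz_pow]
      simp only [smul_eq_mul, nsmul_eq_mul]
      rw [← map_natCast (PowerSeries.C) l]
      try ring
    rw [h2, PowerSeries.coeff_C_mul] at h1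
    push_cast
    linear_combination -h1
  set c := coeff i (f ^ l) with hc
  set d := coeff (i - 1) (f ^ (l - 1) * PowerSeries.derivative ℚ f) with hd
  have hine : (i : ℚ) ≠ 0 := by positivity
  have hlne : (l : ℚ) ≠ 0 := by positivity
  have hdne : d ≠ 0 := by
    intro h
    apply hne
    have := hkey
    rw [h, mul_zero] at this
    exact (mul_eq_zero.1 this).resolve_left hine
  have hval : padicValRat p (i : ℚ) + padicValRat p c =
      padicValRat p (l : ℚ) + padicValRat p d := by
    rw [← padicValRat.mul hine hne, ← padicValRat.mul hlne hdne, hkey]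
  have hd0 : 0 ≤ padicValRat p d := by
    rw [← norm_le_one_iff_val p d hdne]
    exact norm_mul_le_one p _ _ (norm_pow_le_one p f hfn (l - 1)) hdn _
  have hvi : padicValRat p (i : ℚ) = (padicValNat p i : ℤ) := by
    exact_mod_cast (padicValRat.of_nat (p := p) (n := i))
  have hvl : padicValRat p (l : ℚ) = (padicValNat p l : ℤ) := by
    exact_mod_cast (padicValRat.of_nat (p := p) (n := l))
  rw [hvi, hvl] at hval
  linarith
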